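/- Consider ℝ³ with the so(2,1) Lie–Poisson tensor Π(x) = [[0, x₃, −x₂], [−x₃, 0, −x₁], [x₂, x₁, 0]] and Hamiltonian H(x) = ½(αx₁² + βx₂² + γx₃²) with −β < α < −γ. Set p = √(−(α+γ)/(β−γ)) and q = √((α+β)/(β−γ)). Then for every t > 0 and signs σ₂, σ₃ ∈ {±1}, the point x_e = t(1, σ₂p, σ₃q) satisfies X_H(x_e) = ξ x_e with ξ = σ₂σ₃ t √(−(α+γ)(α+β)) ≠ 0, where X_H(x) = Π(x)∇H(x). -/

import Mathlib

/-!
STATEMENT 15. On `ℝ³` with the `so(2,1)` Lie–Poisson tensor and Hamiltonian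
`H(x) = ½(α x₁² + β x₂² + γ x₃²)` with `-β < α < -γ`, setting
`p = √(-(α+γ)/(β-γ))` and `q = √((α+β)/(β-γ))`, for every `t > 0` and signs
`σ₂, σ₃ ∈ {±1}` the point `x_e = t • (1, σ₂ p, σ₃ q)` satisfies
`X_H(x_e) = ξ • x_e` with `ξ = σ₂ σ₃ t √(-(α+γ)(α+β)) ≠ 0`, where
`X_H(x) = Π(x) ∇H(x) = ((β-γ) x₂ x₃, -(α+γ) x₁ x₃, (α+β) x₁ x₂)`.
-/
theorem stmt_15 (α β γ : ℝ) (h1 : -β < α) (h2 : α < -γ) :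
    let p : ℝ := Real.sqrt (-(α + γ) / (β - γ))
    let q : ℝ := Real.sqrt ((α + β) / (β - γ))
    let XH : (Fin 3 → ℝ) → (Fin 3 → ℝ) := fun x =>
      ![(β - γ) * x 1 * x 2, -(α + γ) * x 0 * x 2, (α + β) * x 0 * x 1]
    ∀ (t : ℝ), 0 < t → ∀ σ₂ σ₃ : ℝ, (σ₂ = 1 ∨ σ₂ = -1) → (σ₃ = 1 ∨ σ₃ = -1) →
      XH (t • ![1, σ₂ * p, σ₃ * q])
          = (σ₂ * σ₃ * t * Real.sqrt (-((α + γ) * (α + β)))) • (t • ![1, σ₂ * p, σ₃ * q]) ∧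
        σ₂ * σ₃ * t * Real.sqrt (-((α + γ) * (α + β))) ≠ 0 := by
  intro p q XH t ht σ₂ σ₃ hσ₂ hσ₃
  have hA : (0:ℝ) < -(α + γ) := by linarith
  have hB : (0:ℝ) < α + β := by linarith
  have hC : (0:ℝ) < β - γ := by linarith
  have hp : p ^ 2 = -(α + γ) / (β - γ) := Real.sq_sqrt (by positivity)
  have hq : q ^ 2 = (α + β) / (β - γ) := Real.sq_sqrt (by positivity)
  have hp0 : 0 ≤ p := Real.sqrt_nonneg _
  have hq0 : 0 ≤ q := Real.sqrt_nonneg _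
  set s : ℝ := Real.sqrt (-((α + γ) * (α + β))) with hs
  have hs2 : s ^ 2 = -((α + γ) * (α + β)) := Real.sq_sqrt (by nlinarith)
  have hspos : 0 < s := Real.sqrt_pos.mpr (by nlinarith)
  have hpq : s = (β - γ) * (p * q) := by
    have h1' : ((β - γ) * (p * q)) ^ 2 = s ^ 2 := by
      rw [hs2, mul_pow, mul_pow, hp, hq]; field_simp
    have h2' : 0 ≤ (β - γ) * (p * q) := by positivity
    nlinarith [hspos.le]
  have hps : p * s = -(α + γ) * q := by
    rw [hpq]
    have : p ^ 2 * (β - γ) = -(α + γ) := by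
      rw [hp]; field_simp
    nlinarith [this]
  have hqs : q * s = (α + β) * p := by
    rw [hpq]
    have : q ^ 2 * (β - γ) = α + β := by
      rw [hq]; field_simp
    nlinarith [this]
  have hσ₂2 : σ₂ * σ₂ = 1 := by rcases hσ₂ with h | h <;> rw [h] <;> norm_num
  have hσ₃2 : σ₃ * σ₃ = 1 := by rcases hσ₃ with h | h <;> rw [h] <;> norm_num
  constructor
  · funext i
    fin_cases i <;>
      simp [XH, Matrix.smul_cons, smul_eq_mul] <;>
      first
        | linear_combination (-σ₂*σ₃*t^2) * hpq
        | linear_combination (-σ₃*t^2) * hps - σ₃*t^2*p*s*hσ₂2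
        | linear_combination (-σ₂*t^2) * hqs - σ₂*t^2*q*s*hσ₃2
  · have hσ₂0 : σ₂ ≠ 0 := by rcases hσ₂ with h | h <;> rw [h] <;> norm_num
    have hσ₃0 : σ₃ ≠ 0 := by rcases hσ₃ with h | h <;> rw [h] <;> norm_num
    positivity
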